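/- arXiv:0801.3790 — 2 statements merged into one kernel-verified Lean document; each statement's English description precedes it below -/
import Mathlib

section
/- Every vertex of P(G,w) has the form (-1/w(C))·χ(C) for some simple directed cycle C with w(C) < 0. Consequently, the vertices of P(G,w) are in one-to-one correspondence with the negative-weight directed cycles of (G,w). -/
open Finset

/-- A simple directed cycle, identified with its arc set: the arcs
`(f i, f (i+1))` of an injective map `f : ZMod (n+1) → V`. -/
def IsCycle {V : Type} [DecidableEq V] (C : Finset (V × V)) : Prop :=
  ∃ (n : ℕ) (f : ZMod (n + 1) → V), Function.Injective f ∧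
    C = Finset.image (fun i => (f i, f (i + 1))) Finset.univ

/-- Characteristic vector of an arc set. -/
def chi {V : Type} [DecidableEq V] (C : Finset (V × V)) : V × V → ℝ :=
  fun e => if e ∈ C then 1 else 0

/-- Membership in the polyhedron `P(G,w)` of negative-weight flows:
nonnegativity, support in `E`, flow conservation at every vertex, and
total weight `-1`. -/
def memP {V : Type} [Fintype V] [DecidableEq V] (E : Finset (V × V))
    (w : V × V → ℝ) (y : V × V → ℝ) : Prop :=
  (∀ e, 0 ≤ y e) ∧ (∀ e, e ∉ E → y e = 0) ∧
  (∀ u : V, ∑ e ∈ E.filter (fun e => e.1 = u), y e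
          = ∑ e ∈ E.filter (fun e => e.2 = u), y e) ∧
  (∑ e ∈ E, w e * y e = -1)

/-- A vertex (extreme point) of a convex set: a member which is not a proper
convex combination of two distinct members. -/
def IsVertexOf {α : Type*} [AddCommGroup α] [Module ℝ α] (P : Set α) (y : α) : Prop :=
  y ∈ P ∧ ¬ ∃ y₁ ∈ P, ∃ y₂ ∈ P, y₁ ≠ y₂ ∧
    ∃ t : ℝ, 0 < t ∧ t < 1 ∧ y = t • y₁ + (1 - t) • y₂

lemma chi_nonneg {V : Type} [DecidableEq V] (C : Finset (V × V)) (e : V × V) :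
    0 ≤ chi C e := by unfold chi; split <;> norm_num

lemma cycle_nonempty {V : Type} [DecidableEq V] {C : Finset (V × V)}
    (hC : IsCycle C) : C.Nonempty := by
  obtain ⟨n, f, hinj, rfl⟩ := hC
  exact ⟨_, Finset.mem_image_of_mem _ (Finset.mem_univ (0 : ZMod (n+1)))⟩


lemma cycle_card_eq {V : Type} [DecidableEq V] {C : Finset (V × V)}
    (hC : IsCycle C) (u : V) :
    (C.filter (fun e => e.1 = u)).card = (C.filter (fun e => e.2 = u)).card := by
  classical
  obtain ⟨n, f, hinj, rfl⟩ := hC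
  set g : ZMod (n+1) → V × V := fun i => (f i, f (i + 1)) with hg
  have hginj : Function.Injective g := fun a b hab => hinj (congrArg Prod.fst hab)
  have h1 : ∀ p : V × V → Prop, [inst : DecidablePred p] →
      ((Finset.univ.image g).filter p).card = (Finset.univ.filter (fun i => p (g i))).card := by
    intro p inst
    rw [Finset.filter_image, Finset.card_image_of_injective _ hginj]
  rw [h1, h1]
  apply Finset.card_bij (fun (a : ZMod (n+1)) _ => a - 1)
  · intro a ha
    simp only [Finset.mem_filter, Finset.mem_univ, true_and, hg] at ha ⊢
    rw [sub_add_cancel]; exact ha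
  · intro a _ b _ hab
    exact sub_left_injective hab
  · intro b hb
    simp only [Finset.mem_filter, Finset.mem_univ, true_and, hg] at hb ⊢
    exact ⟨b + 1, hb, by rw [add_sub_cancel_right]⟩

lemma chi_sum_filter {V : Type} [Fintype V] [DecidableEq V]
    {C E : Finset (V × V)} (hCE : C ⊆ E) (p : V × V → Prop) [DecidablePred p] :
    ∑ e ∈ E.filter p, chi C e = ((C.filter p).card : ℝ) := by
  unfold chi
  rw [Finset.sum_boole]
  congr 2
  ext e
  simp only [Finset.mem_filter]
  exact ⟨fun h => ⟨h.2, h.1.2⟩, fun h => ⟨⟨hCE h.1, h.2⟩, h.1⟩⟩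

lemma chi_sum_mul {V : Type} [Fintype V] [DecidableEq V]
    {C E : Finset (V × V)} (hCE : C ⊆ E) (w : V × V → ℝ) :
    ∑ e ∈ E, w e * chi C e = ∑ e ∈ C, w e := by
  unfold chi
  simp only [mul_ite, mul_one, mul_zero]
  rw [Finset.sum_ite_mem, Finset.inter_eq_right.mpr hCE]

lemma exists_cycle_subset {V : Type} [Fintype V] [DecidableEq V]
    (S : Finset (V × V)) (hne : S.Nonempty)
    (hstep : ∀ u v, (u, v) ∈ S → ∃ x, (v, x) ∈ S) :
    ∃ C : Finset (V × V), IsCycle C ∧ C ⊆ S := by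
  classical
  -- step function
  have hnext : ∀ v : V, (∃ x, (v, x) ∈ S) → (v, (if hv : ∃ x, (v, x) ∈ S then hv.choose else v)) ∈ S := by
    intro v hv
    simp only [dif_pos hv]
    exact hv.choose_spec
  set nxt : V → V := fun v => if hv : ∃ x, (v, x) ∈ S then hv.choose else v with hnxt
  obtain ⟨⟨u₀, v₀⟩, huv⟩ := hne
  set h : ℕ → V := fun k => nxt^[k] v₀ with hh
  have hwalk : ∀ k, (h k, h (k+1)) ∈ S := by
    intro k
    induction k with
    | zero =>
      have : (h 0, nxt (h 0)) ∈ S := hnext v₀ (hstep u₀ v₀ huv)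
      simpa [hh, Function.iterate_succ_apply'] using this
    | succ k ih =>
      have h2 : (h (k+1), nxt (h (k+1))) ∈ S := hnext _ (hstep _ _ ih)
      simpa [hh, Function.iterate_succ_apply'] using h2
  -- find a repeat with minimal gap
  have hex : ∃ m, 0 < m ∧ ∃ i, h i = h (i + m) := by
    obtain ⟨a, b, hab, heq⟩ := Finite.exists_ne_map_eq_of_infinite h
    rcases lt_or_gt_of_ne hab with hlt | hlt
    · exact ⟨b - a, by omega, a, by rw [heq]; congr 1; omega⟩
    · exact ⟨a - b, by omega, b, by rw [← heq]; congr 1; omega⟩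
  have hex2 : ∃ m, (0 < m ∧ ∃ i, h i = h (i + m)) ∧
      ∀ d, 0 < d → d < m → ∀ j, h j ≠ h (j + d) :=
    ⟨Nat.find hex, Nat.find_spec hex, fun d hd hdm j hj => Nat.find_min hex hdm ⟨hd, j, hj⟩⟩
  obtain ⟨m, ⟨hmpos, i, hrep⟩, hmin⟩ := hex2
  -- build the cycle
  obtain ⟨n, rfl⟩ : ∃ n, m = n + 1 := ⟨m - 1, by omega⟩
  set f : ZMod (n+1) → V := fun k => h (i + k.val) with hf
  have hvallt : ∀ k : ZMod (n+1), k.val < n + 1 := fun k => ZMod.val_lt k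
  have hfinj : Function.Injective f := by
    intro a b hab
    have hab' : h (i + a.val) = h (i + b.val) := hab
    by_contra hne'
    have hvne : a.val ≠ b.val := fun hv => hne' (ZMod.val_injective _ hv)
    rcases lt_or_gt_of_ne hvne with hlt | hlt
    · exact hmin (b.val - a.val) (by omega) (by have := hvallt b; omega) (i + a.val)
        (by rw [hab']; congr 1; omega)
    · exact hmin (a.val - b.val) (by omega) (by have := hvallt a; omega) (i + b.val)
        (by rw [← hab']; congr 1; omega)
  refine ⟨_, ⟨n, f, hfinj, rfl⟩, ?_⟩
  intro e he
  simp only [Finset.mem_image, Finset.mem_univ, true_and] at he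
  obtain ⟨k, rfl⟩ := he
  have hk1 : (k + 1).val = (k.val + 1) % (n + 1) := by
    rw [ZMod.val_add, ZMod.val_one_eq_one_mod, Nat.add_mod k.val 1 (n+1),
      Nat.mod_eq_of_lt (hvallt k)]
  show (h (i + k.val), h (i + (k + 1).val)) ∈ S
  rcases eq_or_lt_of_le (Nat.le_of_lt_succ (hvallt k)) with hkv | hkv
  · -- wrap-around
    have h1 : (k + 1).val = 0 := by rw [hk1, hkv]; exact Nat.mod_self _
    rw [h1]
    have h2 := hwalk (i + k.val)
    rw [show i + k.val + 1 = i + (n + 1) by omega, ← hrep] at h2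
    simpa using h2
  · have h1 : (k + 1).val = k.val + 1 := by rw [hk1]; exact Nat.mod_eq_of_lt (by omega)
    rw [h1, ← Nat.add_assoc]
    exact hwalk (i + k.val)


/-- every vertex of `P(G,w)` is `(-1/w(C))·χ(C)` for a negative cycle `C`,
and distinct negative cycles give distinct such points, so the vertices are in
one-to-one correspondence with the negative cycles. -/
theorem stmt_5 {V : Type} [Fintype V] [DecidableEq V]
    (E : Finset (V × V)) (w : V × V → ℝ) :
    (∀ y : V × V → ℝ, IsVertexOf {z | memP E w z} y →
      ∃ C : Finset (V × V), IsCycle C ∧ C ⊆ E ∧ (∑ e ∈ C, w e) < 0 ∧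
        y = fun e => (-1 / ∑ e ∈ C, w e) * chi C e) ∧
    (∀ C₁ C₂ : Finset (V × V),
      IsCycle C₁ → C₁ ⊆ E → (∑ e ∈ C₁, w e) < 0 →
      IsCycle C₂ → C₂ ⊆ E → (∑ e ∈ C₂, w e) < 0 →
      (fun e => (-1 / ∑ e ∈ C₁, w e) * chi C₁ e)
        = (fun e => (-1 / ∑ e ∈ C₂, w e) * chi C₂ e) → C₁ = C₂) := by
  classical
  constructor
  · -- Part 1
    rintro y ⟨hyP, hnv⟩
    obtain ⟨hpos, hsupp, hcons, hwt⟩ := hyP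
    set S : Finset (V × V) := E.filter (fun e => 0 < y e) with hS
    have hSne : S.Nonempty := by
      by_contra hSe
      rw [Finset.not_nonempty_iff_eq_empty] at hSe
      have hz : ∀ e ∈ E, y e = 0 := by
        intro e he
        by_contra hye
        have : e ∈ S := Finset.mem_filter.mpr ⟨he, lt_of_le_of_ne (hpos e) (Ne.symm hye)⟩
        simp [hSe] at this
      have : ∑ e ∈ E, w e * y e = 0 :=
        Finset.sum_eq_zero (fun e he => by rw [hz e he, mul_zero])
      rw [hwt] at this; norm_num at this
    have hstep : ∀ u v, (u, v) ∈ S → ∃ x, (v, x) ∈ S := by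
      intro u v huv
      rw [hS, Finset.mem_filter] at huv
      have hin : 0 < ∑ e ∈ E.filter (fun e => e.2 = v), y e := by
        have hmem : (u, v) ∈ E.filter (fun e => e.2 = v) :=
          Finset.mem_filter.mpr ⟨huv.1, rfl⟩
        have := Finset.single_le_sum (f := y) (fun e _ => hpos e) hmem
        linarith [huv.2]
      rw [← hcons v] at hin
      have : ∃ e ∈ E.filter (fun e => e.1 = v), 0 < y e := by
        by_contra hc
        push_neg at hc
        have : ∑ e ∈ E.filter (fun e => e.1 = v), y e = 0 :=
          Finset.sum_eq_zero (fun e he => le_antisymm (hc e he) (hpos e))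
        rw [this] at hin; norm_num at hin
      obtain ⟨e, he, hye⟩ := this
      rw [Finset.mem_filter] at he
      refine ⟨e.2, ?_⟩
      rw [hS, Finset.mem_filter]
      rw [show (v, e.2) = e by rw [← he.2]]
      exact ⟨he.1, hye⟩
    obtain ⟨C, hcyc, hCS⟩ := exists_cycle_subset S hSne hstep
    have hCE : C ⊆ E := hCS.trans (Finset.filter_subset _ _)
    have hCpos : ∀ e ∈ C, 0 < y e := fun e he => (Finset.mem_filter.mp (hCS he)).2
    have hCne : C.Nonempty := cycle_nonempty hcyc
    set W : ℝ := ∑ e ∈ C, w e with hWdef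
    -- choose epsilon
    set ε : ℝ := min (C.inf' hCne y) (1 / (2 * (|W| + 1))) with hε
    have hε0 : 0 < ε := by
      apply lt_min
      · exact (Finset.lt_inf'_iff hCne).mpr (fun e he => hCpos e he)
      · positivity
    have hεy : ∀ e ∈ C, ε ≤ y e :=
      fun e he => le_trans (min_le_left _ _) (Finset.inf'_le _ he)
    have hεW : ε * |W| < 1 := by
      have h1 : ε ≤ 1 / (2 * (|W| + 1)) := min_le_right _ _
      have h2 : 1 / (2 * (|W| + 1)) * |W| < 1 := by
        rw [div_mul_eq_mul_div, one_mul, div_lt_one (by positivity)]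
        linarith [abs_nonneg W]
      calc ε * |W| ≤ 1 / (2 * (|W| + 1)) * |W| :=
            mul_le_mul_of_nonneg_right h1 (abs_nonneg W)
        _ < 1 := h2
    have hd1 : 0 < 1 - ε * W := by
      have := neg_abs_le W
      nlinarith [hε0, hεW, abs_nonneg W, le_abs_self W]
    have hd2 : 0 < 1 + ε * W := by
      nlinarith [hε0, hεW, abs_nonneg W, neg_abs_le W]
    set y₁ : V × V → ℝ := fun e => (y e + ε * chi C e) / (1 - ε * W) with hy₁
    set y₂ : V × V → ℝ := fun e => (y e - ε * chi C e) / (1 + ε * W) with hy₂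
    have hchiE : ∀ e, e ∉ E → chi C e = 0 := by
      intro e he
      unfold chi
      rw [if_neg (fun hc => he (hCE hc))]
    have hchicons : ∀ u : V, ∑ e ∈ E.filter (fun e => e.1 = u), chi C e
        = ∑ e ∈ E.filter (fun e => e.2 = u), chi C e := by
      intro u
      rw [chi_sum_filter hCE, chi_sum_filter hCE, cycle_card_eq hcyc u]
    have h1P : memP E w y₁ := by
      refine ⟨?_, ?_, ?_, ?_⟩
      · intro e
        apply div_nonneg _ hd1.le
        have := chi_nonneg C e
        have := hpos e
        positivity
      · intro e he
        rw [hy₁]; simp only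
        rw [hsupp e he, hchiE e he, mul_zero, add_zero, zero_div]
      · intro u
        rw [hy₁]
        simp only
        rw [← Finset.sum_div, ← Finset.sum_div]
        congr 1
        rw [Finset.sum_add_distrib, Finset.sum_add_distrib, ← Finset.mul_sum,
          ← Finset.mul_sum, hcons u, hchicons u]
      · rw [hy₁]
        simp only [← mul_div_assoc]
        rw [← Finset.sum_div]
        rw [div_eq_iff hd1.ne']
        have hexp : ∑ e ∈ E, w e * (y e + ε * chi C e)
            = ∑ e ∈ E, w e * y e + ε * ∑ e ∈ E, w e * chi C e := by
          rw [Finset.mul_sum]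
          rw [← Finset.sum_add_distrib]
          congr 1; funext e; ring
        rw [hexp, hwt, chi_sum_mul hCE, ← hWdef]
        ring
    have h2P : memP E w y₂ := by
      refine ⟨?_, ?_, ?_, ?_⟩
      · intro e
        apply div_nonneg _ hd2.le
        by_cases he : e ∈ C
        · have h1 := hεy e he
          unfold chi
          rw [if_pos he, mul_one]
          linarith
        · unfold chi
          rw [if_neg he, mul_zero, sub_zero]
          exact hpos e
      · intro e he
        rw [hy₂]; simp only
        rw [hsupp e he, hchiE e he, mul_zero, sub_zero, zero_div]
      · intro u
        rw [hy₂]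
        simp only
        rw [← Finset.sum_div, ← Finset.sum_div]
        congr 1
        rw [Finset.sum_sub_distrib, Finset.sum_sub_distrib, ← Finset.mul_sum,
          ← Finset.mul_sum, hcons u, hchicons u]
      · rw [hy₂]
        simp only [← mul_div_assoc]
        rw [← Finset.sum_div]
        rw [div_eq_iff hd2.ne']
        have hexp : ∑ e ∈ E, w e * (y e - ε * chi C e)
            = ∑ e ∈ E, w e * y e - ε * ∑ e ∈ E, w e * chi C e := by
          rw [Finset.mul_sum, ← Finset.sum_sub_distrib]
          congr 1; funext e; ring
        rw [hexp, hwt, chi_sum_mul hCE, ← hWdef]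
        ring
    have hkey : y₁ = y₂ := by
      by_contra hne'
      apply hnv
      refine ⟨y₁, h1P, y₂, h2P, hne', (1 - ε * W) / 2, by linarith, by linarith, ?_⟩
      funext e
      simp only [Pi.add_apply, Pi.smul_apply, smul_eq_mul, hy₁, hy₂]
      field_simp
      ring
    have hyCval : ∀ e ∈ C, W * y e = -1 := by
      intro e he
      have hk := congrFun hkey e
      simp only [hy₁, hy₂] at hk
      unfold chi at hk
      rw [if_pos he, mul_one] at hk
      rw [div_eq_div_iff hd1.ne' hd2.ne'] at hk
      have h4 : ε * (W * y e + 1) = 0 := by linear_combination hk / 2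
      rcases mul_eq_zero.mp h4 with h | h
      · exact absurd h hε0.ne'
      · linarith
    have hW0 : W ≠ 0 := by
      obtain ⟨e₀, he₀⟩ := hCne
      intro hW
      have := hyCval e₀ he₀
      rw [hW, zero_mul] at this
      norm_num at this
    have hyC : ∀ e ∈ C, y e = -1 / W := by
      intro e he
      rw [eq_div_iff hW0]
      linarith [hyCval e he]
    have hWneg : W < 0 := by
      obtain ⟨e₀, he₀⟩ := hCne
      rcases lt_trichotomy W 0 with h | h | h
      · exact h
      · exact absurd h hW0
      · have h1 := hpos e₀
        rw [hyC e₀ he₀] at h1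
        have : -1 / W < 0 := div_neg_of_neg_of_pos (by norm_num) h
        linarith
    have hyoff : ∀ e, e ∉ C → y e = 0 := by
      intro e he
      have hk := congrFun hkey e
      simp only [hy₁, hy₂] at hk
      unfold chi at hk
      rw [if_neg he, mul_zero, add_zero, sub_zero] at hk
      rw [div_eq_div_iff hd1.ne' hd2.ne'] at hk
      have h4 : y e * (2 * ε * W) = 0 := by linear_combination hk
      rcases mul_eq_zero.mp h4 with h | h
      · exact h
      · exfalso
        rcases mul_eq_zero.mp h with h' | h'
        · linarith
        · exact hW0 h'
    refine ⟨C, hcyc, hCE, hWneg, ?_⟩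
    funext e
    by_cases he : e ∈ C
    · unfold chi
      rw [if_pos he, mul_one, ← hWdef]
      exact hyC e he
    · unfold chi
      rw [if_neg he, mul_zero]
      exact hyoff e he
  · -- Part 2: injectivity
    intro C₁ C₂ h₁c h₁E h₁w h₂c h₂E h₂w heq
    have hp1 : 0 < -1 / ∑ e ∈ C₁, w e := div_pos_of_neg_of_neg (by norm_num) h₁w
    have hp2 : 0 < -1 / ∑ e ∈ C₂, w e := div_pos_of_neg_of_neg (by norm_num) h₂w
    ext e
    have hk := congrFun heq e
    constructor
    · intro he
      by_contra he2
      unfold chi at hk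
      rw [if_pos he, if_neg he2, mul_one, mul_zero] at hk
      linarith
    · intro he
      by_contra he2
      unfold chi at hk
      rw [if_neg he2, if_pos he, mul_zero, mul_one] at hk
      linarith
end

section
/- Let P'(G,w) = { y ∈ ℝ^E : y ≥ 0, flow conservation at every vertex, ∑_e w_e y_e = 0, ∑_e y_e = 1 }. If y is a vertex of P'(G,w), then the support of y does not contain two distinct simple directed cycles C₁, C₂ with w(C₁) = w(C₂) = 0. -/
open Finset

/-- Membership in the polytope `P'(G,w)`: nonnegativity, support in `E`, flow
conservation, total weight `0`, and normalization `∑ y = 1`. -/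
def memP' {V : Type} [Fintype V] [DecidableEq V] (E : Finset (V × V))
    (w : V × V → ℝ) (y : V × V → ℝ) : Prop :=
  (∀ e, 0 ≤ y e) ∧ (∀ e, e ∉ E → y e = 0) ∧
  (∀ u : V, ∑ e ∈ E.filter (fun e => e.1 = u), y e
          = ∑ e ∈ E.filter (fun e => e.2 = u), y e) ∧
  (∑ e ∈ E, w e * y e = 0) ∧ (∑ e ∈ E, y e = 1)

lemma cycle_ne {V : Type} [DecidableEq V] {C : Finset (V × V)} (h : IsCycle C) : C.Nonempty := by
  obtain ⟨n, f, hf, rfl⟩ := h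
  exact ⟨(f 0, f (0+1)), Finset.mem_image.mpr ⟨0, Finset.mem_univ _, rfl⟩⟩

lemma cycle_flow {V : Type} [DecidableEq V] {C : Finset (V × V)} (h : IsCycle C) (u : V) :
    (C.filter (fun e => e.1 = u)).card = (C.filter (fun e => e.2 = u)).card := by
  obtain ⟨n, f, hf, rfl⟩ := h
  have hg : Function.Injective (fun i : ZMod (n+1) => (f i, f (i+1))) := by
    intro i j hij
    exact hf (congrArg Prod.fst hij)
  rw [Finset.filter_image, Finset.filter_image,
    Finset.card_image_of_injective _ hg, Finset.card_image_of_injective _ hg]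
  refine Finset.card_bij' (fun i _ => i - 1) (fun j _ => j + 1) ?_ ?_ ?_ ?_
  case refine_1 =>
    intro a ha
    simp only [Finset.mem_filter, Finset.mem_univ, true_and, sub_add_cancel] at ha ⊢
    exact ha
  case refine_2 =>
    intro a ha
    simp only [Finset.mem_filter, Finset.mem_univ, true_and] at ha ⊢
    simpa using ha
  case refine_3 => intro a _; exact sub_add_cancel a 1
  case refine_4 => intro a _; exact add_sub_cancel_right a 1

lemma sum_mul_chi {V : Type} [DecidableEq V] (s C : Finset (V × V)) (g : V × V → ℝ) :
    ∑ e ∈ s, g e * chi C e = ∑ e ∈ s ∩ C, g e := by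
  rw [← Finset.filter_mem_eq_inter, Finset.sum_filter]
  refine Finset.sum_congr rfl fun e _ => ?_
  unfold chi
  split <;> simp_all

lemma sum_chi {V : Type} [DecidableEq V] (s C : Finset (V × V)) :
    ∑ e ∈ s, chi C e = ((s ∩ C).card : ℝ) := by
  have := sum_mul_chi s C (fun _ => 1)
  simp only [one_mul] at this
  rw [this, Finset.sum_const, nsmul_eq_mul, mul_one]

/-- the support of a vertex of `P'(G,w)` does not contain two
distinct zero-weight cycles. -/
theorem stmt_10 {V : Type} [Fintype V] [DecidableEq V]
    (E : Finset (V × V)) (w : V × V → ℝ) (y : V × V → ℝ)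
    (hv : IsVertexOf {z | memP' E w z} y) :
    ¬ ∃ C₁ C₂ : Finset (V × V), IsCycle C₁ ∧ IsCycle C₂ ∧ C₁ ≠ C₂ ∧
        C₁ ⊆ E ∧ C₂ ⊆ E ∧ (∑ e ∈ C₁, w e) = 0 ∧ (∑ e ∈ C₂, w e) = 0 ∧
        ∀ e ∈ C₁ ∪ C₂, 0 < y e := by
  rintro ⟨C₁, C₂, hC₁, hC₂, hne, hC₁E, hC₂E, hw₁, hw₂, hpos⟩
  obtain ⟨hyP, hvert⟩ := hv
  obtain ⟨hynn, hysupp, hyflow, hyw, hys⟩ := hyP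
  apply hvert
  have h₁ : (0:ℝ) < C₁.card := by exact_mod_cast (cycle_ne hC₁).card_pos
  have h₂ : (0:ℝ) < C₂.card := by exact_mod_cast (cycle_ne hC₂).card_pos
  set d : V × V → ℝ := fun e => chi C₁ e / C₁.card - chi C₂ e / C₂.card with hd
  -- basic bounds on d
  have hchi01 : ∀ (C : Finset (V × V)) e, 0 ≤ chi C e ∧ chi C e ≤ 1 := by
    intro C e; unfold chi; split <;> norm_num
  have hdbound : ∀ e, -1 ≤ d e ∧ d e ≤ 1 := by
    intro e
    have b1 := hchi01 C₁ e; have b2 := hchi01 C₂ e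
    have c1 : (1:ℝ) ≤ C₁.card := by exact_mod_cast (cycle_ne hC₁).card_pos
    have c2 : (1:ℝ) ≤ C₂.card := by exact_mod_cast (cycle_ne hC₂).card_pos
    have k1 : 0 ≤ chi C₁ e / C₁.card ∧ chi C₁ e / C₁.card ≤ 1 := by
      refine ⟨div_nonneg b1.1 h₁.le, ?_⟩
      rw [div_le_one h₁]; linarith [b1.2]
    have k2 : 0 ≤ chi C₂ e / C₂.card ∧ chi C₂ e / C₂.card ≤ 1 := by
      refine ⟨div_nonneg b2.1 h₂.le, ?_⟩
      rw [div_le_one h₂]; linarith [b2.2]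
    constructor <;> simp only [hd] <;> linarith [k1.1, k1.2, k2.1, k2.2]
  have hdzero : ∀ e, e ∉ C₁ ∪ C₂ → d e = 0 := by
    intro e he
    simp only [Finset.mem_union, not_or] at he
    simp [hd, chi, he.1, he.2]
  -- epsilon
  obtain ⟨e₀, he₀, hmin⟩ := Finset.exists_min_image (C₁ ∪ C₂) y ⟨(cycle_ne hC₁).choose,
    Finset.mem_union_left _ (cycle_ne hC₁).choose_spec⟩
  set ε := y e₀ with hε
  have hεpos : 0 < ε := hpos e₀ he₀
  -- the two perturbed points
  set y₁ : V × V → ℝ := fun e => y e + ε * d e with hy₁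
  set y₂ : V × V → ℝ := fun e => y e - ε * d e with hy₂
  -- sums of d over filtered sets
  have hinter : ∀ (p : V × V → Prop) [DecidablePred p] (C : Finset (V × V)), C ⊆ E →
      (E.filter p) ∩ C = C.filter p := by
    intro p _ C hCE
    ext e
    simp only [Finset.mem_inter, Finset.mem_filter]
    constructor
    · rintro ⟨⟨_, hp⟩, hc⟩; exact ⟨hc, hp⟩
    · rintro ⟨hc, hp⟩; exact ⟨⟨hCE hc, hp⟩, hc⟩
  have hdflow : ∀ u : V, ∑ e ∈ E.filter (fun e => e.1 = u), d e
      = ∑ e ∈ E.filter (fun e => e.2 = u), d e := by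
    intro u
    simp only [hd]
    rw [Finset.sum_sub_distrib, Finset.sum_sub_distrib, ← Finset.sum_div, ← Finset.sum_div,
      ← Finset.sum_div, ← Finset.sum_div, sum_chi, sum_chi, sum_chi, sum_chi,
      hinter _ _ hC₁E, hinter _ _ hC₁E, hinter _ _ hC₂E, hinter _ _ hC₂E,
      cycle_flow hC₁ u, cycle_flow hC₂ u]
  have hdw : ∑ e ∈ E, w e * d e = 0 := by
    have : ∀ e ∈ E, w e * d e = w e * chi C₁ e / C₁.card - w e * chi C₂ e / C₂.card := by
      intro e _; simp only [hd]; ring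
    rw [Finset.sum_congr rfl this, Finset.sum_sub_distrib, ← Finset.sum_div, ← Finset.sum_div,
      sum_mul_chi, sum_mul_chi, Finset.inter_eq_right.mpr hC₁E, Finset.inter_eq_right.mpr hC₂E,
      hw₁, hw₂]
    simp
  have hds : ∑ e ∈ E, d e = 0 := by
    simp only [hd]
    rw [Finset.sum_sub_distrib, ← Finset.sum_div, ← Finset.sum_div, sum_chi, sum_chi,
      Finset.inter_eq_right.mpr hC₁E, Finset.inter_eq_right.mpr hC₂E]
    rw [div_self (ne_of_gt h₁), div_self (ne_of_gt h₂), sub_self]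
  -- membership of perturbed points
  have hmem : ∀ s : ℝ, -1 ≤ s → s ≤ 1 → memP' E w (fun e => y e + (s * ε) * d e) := by
    intro s hs1 hs2
    refine ⟨?_, ?_, ?_, ?_, ?_⟩
    · intro e
      show 0 ≤ y e + (s * ε) * d e
      by_cases he : e ∈ C₁ ∪ C₂
      · have h1 := hmin e he
        have h2 := hdbound e
        have hsd : -1 ≤ s * d e := by nlinarith [h2.1, h2.2]
        have := mul_le_mul_of_nonneg_left hsd hεpos.le
        nlinarith
      · rw [hdzero e he]; simpa using hynn e
    · intro e he
      show y e + (s * ε) * d e = 0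
      rw [hdzero e (fun h => he ((Finset.union_subset hC₁E hC₂E) h)), hysupp e he]
      ring
    · intro u
      rw [Finset.sum_add_distrib, Finset.sum_add_distrib, ← Finset.mul_sum, ← Finset.mul_sum,
        hyflow u, hdflow u]
    · have : ∀ e ∈ E, w e * (y e + (s * ε) * d e) = w e * y e + (s * ε) * (w e * d e) := by
        intro e _; ring
      rw [Finset.sum_congr rfl this, Finset.sum_add_distrib, ← Finset.mul_sum, hyw, hdw]
      ring
    · rw [Finset.sum_add_distrib, ← Finset.mul_sum, hys, hds]
      ring
  have hm₁ : memP' E w y₁ := by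
    have := hmem 1 (by norm_num) le_rfl
    simpa [hy₁] using this
  have hm₂ : memP' E w y₂ := by
    have := hmem (-1) le_rfl (by norm_num)
    have h : (fun e => y e + ((-1) * ε) * d e) = y₂ := by
      funext e; simp only [hy₂]; ring
    rwa [h] at this
  -- d is nonzero somewhere
  have hdne : ∃ e, d e ≠ 0 := by
    by_cases hsub : C₁ ⊆ C₂
    · obtain ⟨e, he₂, he₁⟩ := Finset.not_subset.mp (fun h => hne (Finset.Subset.antisymm hsub h))
      refine ⟨e, ?_⟩
      simp only [hd, chi, if_pos he₂, if_neg he₁]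
      intro h
      rw [zero_div, zero_sub, neg_eq_zero, div_eq_zero_iff] at h
      rcases h with h | h
      · exact one_ne_zero h
      · exact (ne_of_gt h₂) h
    · obtain ⟨e, he₁, he₂⟩ := Finset.not_subset.mp hsub
      refine ⟨e, ?_⟩
      simp only [hd, chi, if_pos he₁, if_neg he₂]
      intro h
      rw [zero_div, sub_zero, div_eq_zero_iff] at h
      rcases h with h | h
      · exact one_ne_zero h
      · exact (ne_of_gt h₁) h
  obtain ⟨e, hde⟩ := hdne
  refine ⟨y₁, hm₁, y₂, hm₂, ?_, 1/2, by norm_num, by norm_num, ?_⟩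
  · intro h
    have := congrFun h e
    simp only [hy₁, hy₂] at this
    have : ε * d e = 0 := by linarith
    rcases mul_eq_zero.mp this with h' | h'
    · exact (ne_of_gt hεpos) h'
    · exact hde h'
  · funext e'
    simp only [Pi.add_apply, Pi.smul_apply, smul_eq_mul, hy₁, hy₂]
    ring
end
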